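/- Fix Δ ∈ ℝ, let u be a bounded vertex given by reals a_u, d_u, c_u, b_u (with a_u ≤ d_u, c_u ≤ b_u, a_u < c_u, d_u < b_u) and let v be an unbounded vertex given by reals a_v < b_v, such that the six reals a_u, d_u, c_u, b_u, a_v, b_v are pairwise distinct and the three reals c_u − a_u, b_u − d_u, b_v − a_v are pairwise distinct. Then p_v ∈ S_{L_u} if and only if either (i) a_v < a_u and T̄_u ∩ T̄_v ≠ ∅, or (ii) a_u < a_v < d_u and b_v ≥ λ·c_u + (1−λ)·b_u, where λ ∈ (0,1) is the unique real with a_v = λ·a_u + (1−λ)·d_u. In particular, if d_u < a_v then p_v ∉ S_{L_u}. -/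

import Mathlib

open Set

/-- The shadow of a point `t`. -/
def ptShadow (t : ℝ × ℝ) : Set (ℝ × ℝ) :=
  {p : ℝ × ℝ | p.1 ≤ t.1 ∧ p.2 - p.1 ≤ t.2 - t.1}

/-- The shadow of a set of points. -/
def setShadow (L : Set (ℝ × ℝ)) : Set (ℝ × ℝ) := ⋃ t ∈ L, ptShadow t

/-- The trapezoid `T̄_u` of a bounded vertex `u` given by `a_u, d_u, c_u, b_u`. -/
def trapB (a d c b : ℝ) : Set (ℝ × ℝ) :=
  convexHull ℝ ({(a, 0), (d, 0), (c, 1), (b, 1)} : Set (ℝ × ℝ))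

/-- The segment `L_u` of a bounded vertex `u` (for the fixed parameter `Δ`). -/
def segB (Δ a d c b : ℝ) : Set (ℝ × ℝ) :=
  segment ℝ (a, Δ - (c - a)) (d, Δ - (b - d))

/-- The trapezoid `T̄_v` of an unbounded vertex `v` given by `a_v < b_v`. -/
def trapU (a b : ℝ) : Set (ℝ × ℝ) := segment ℝ (a, 0) (b, 1)

/-- The point `p_v` of an unbounded vertex `v` (for the fixed parameter `Δ`). -/
def ptU (Δ a b : ℝ) : ℝ × ℝ := (a, Δ - (b - a))

lemma shadow_char (Δ au du cu bu av bv : ℝ) :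
    ptU Δ av bv ∈ setShadow (segB Δ au du cu bu) ↔
    ∃ l : ℝ, 0 ≤ l ∧ l ≤ 1 ∧ av ≤ l * au + (1 - l) * du ∧ l * cu + (1 - l) * bu ≤ bv := by
  simp only [setShadow, segB, ptShadow, ptU, mem_iUnion, segment, mem_setOf_eq,
    Prod.smul_mk, Prod.mk_add_mk, smul_eq_mul, exists_prop]
  constructor
  · rintro ⟨t, ⟨a, b, ha, hb, hab, ht⟩, h1, h2⟩
    subst ht
    simp only at h1 h2
    have hb' : b = 1 - a := by linarith
    subst hb'
    exact ⟨a, ha, by linarith, by linarith, by nlinarith⟩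
  · rintro ⟨l, h0, h1, hA, hB⟩
    refine ⟨(l * au + (1-l) * du, l * (Δ - (cu - au)) + (1-l) * (Δ - (bu - du))),
      ⟨l, 1 - l, h0, by linarith, by ring, by simp⟩, by simpa using hA, ?_⟩
    simp only
    nlinarith

lemma trapB_halfspace (au du cu bu : ℝ) (hu1 : au ≤ du) (hu2 : cu ≤ bu) :
    trapB au du cu bu ⊆ {p : ℝ × ℝ | au ≤ p.1 + (au - cu) * p.2} := by
  apply convexHull_min
  · rintro p hp
    simp only [mem_insert_iff, mem_singleton_iff] at hp
    rcases hp with h | h | h | h <;> subst h <;> simp <;> linarith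
  · exact convex_halfSpace_ge ⟨fun p q => by simp [Prod.fst_add, Prod.snd_add]; ring,
      fun c p => by simp [smul_eq_mul]; ring⟩ au

lemma inter_iff (au du cu bu av bv : ℝ) (hu1 : au ≤ du) (hu2 : cu ≤ bu)
    (hav : av < au) (hvb : av < bv) :
    (trapB au du cu bu ∩ trapU av bv).Nonempty ↔ cu ≤ bv := by
  constructor
  · rintro ⟨p, hpB, hpU⟩
    obtain ⟨a, b, ha, hb, hab, hp⟩ := hpU
    have := trapB_halfspace au du cu bu hu1 hu2 hpB
    simp only [mem_setOf_eq] at this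
    rw [← hp] at this
    simp only [Prod.smul_mk, Prod.mk_add_mk, smul_eq_mul] at this
    -- au ≤ (a*av + b*bv) + (au - cu)*(a*0 + b*1)
    by_contra hbc
    push_neg at hbc
    -- this : au ≤ a*av + b*bv + (au-cu)*b ; a = 1-b
    have ha' : a = 1 - b := by linarith
    subst ha'
    have h1b : b ≤ 1 := by linarith
    rcases eq_or_lt_of_le h1b with rfl | hlt
    · simp at this; linarith
    · nlinarith [mul_pos (by linarith : (0:ℝ) < 1 - b) (by linarith : (0:ℝ) < au - av),
        mul_nonneg hb (by linarith : (0:ℝ) ≤ cu - bv)]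
  · intro hcb
    set A := au - av with hA
    set B := bv - cu with hB
    have hApos : 0 < A := by simp [hA]; linarith
    have hBnn : 0 ≤ B := by simp [hB]; linarith
    have hden : 0 < A + B := by linarith
    set y := A / (A + B) with hy
    have hy0 : 0 < y := div_pos hApos hden
    have hy1 : y ≤ 1 := by rw [hy, div_le_one hden]; linarith
    refine ⟨(1 - y) • ((au : ℝ), (0 : ℝ)) + y • ((cu : ℝ), (1 : ℝ)), ?_, ?_⟩
    · exact segment_subset_convexHull (by simp) (by simp)
        ⟨1 - y, y, by linarith, le_of_lt hy0, by ring, rfl⟩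
    · refine ⟨1 - y, y, by linarith, le_of_lt hy0, by ring, ?_⟩
      simp only [Prod.smul_mk, Prod.mk_add_mk, smul_eq_mul, Prod.mk.injEq]
      constructor
      · -- (1-y)*av + y*bv = (1-y)*au + y*cu
        have : (1 - y) * A = y * B := by
          rw [hy]; field_simp; ring
        simp only [hA, hB] at this
        nlinarith
      · trivial

/-- For a bounded vertex `u` and an unbounded vertex `v` in general
position: `p_v ∈ S_{L_u}` iff either (i) `a_v < a_u` and `T̄_u ∩ T̄_v ≠ ∅`, or
(ii) `a_u < a_v < d_u` and `b_v ≥ λ·c_u + (1−λ)·b_u` for the unique `λ ∈ (0,1)` with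
`a_v = λ·a_u + (1−λ)·d_u`. In particular, if `d_u < a_v` then `p_v ∉ S_{L_u}`. -/
theorem stmt2 (Δ au du cu bu av bv : ℝ)
    (hu1 : au ≤ du) (hu2 : cu ≤ bu) (hu3 : au < cu) (hu4 : du < bu)
    (hv : av < bv)
    (hdist : List.Pairwise (· ≠ ·) [au, du, cu, bu, av, bv])
    (hdist' : List.Pairwise (· ≠ ·) [cu - au, bu - du, bv - av]) :
    (ptU Δ av bv ∈ setShadow (segB Δ au du cu bu) ↔
      (av < au ∧ (trapB au du cu bu ∩ trapU av bv).Nonempty) ∨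
        (au < av ∧ av < du ∧ ∃ lam : ℝ, 0 < lam ∧ lam < 1 ∧
          av = lam * au + (1 - lam) * du ∧ lam * cu + (1 - lam) * bu ≤ bv)) ∧
    (du < av → ptU Δ av bv ∉ setShadow (segB Δ au du cu bu)) := by
  simp only [List.pairwise_cons, List.mem_cons, List.not_mem_nil] at hdist
  obtain ⟨h1, h2, -⟩ := hdist
  have hauav : au ≠ av := h1 av (by tauto)
  have hduav : du ≠ av := h2 av (by tauto)
  have hnotmem : ∀ l : ℝ, du < av → ¬(0 ≤ l ∧ l ≤ 1 ∧ av ≤ l * au + (1 - l) * du ∧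
      l * cu + (1 - l) * bu ≤ bv) := by
    rintro l hda ⟨h0, h1, hle, -⟩
    nlinarith [mul_nonneg h0 (by linarith : (0:ℝ) ≤ du - au)]
  constructor
  · rw [shadow_char]
    rcases lt_trichotomy av au with hA | hA | hA
    · rw [inter_iff au du cu bu av bv hu1 hu2 hA hv]
      constructor
      · rintro ⟨l, h0, h1, -, hg⟩
        left
        refine ⟨hA, ?_⟩
        nlinarith [mul_nonneg (by linarith : (0:ℝ) ≤ 1 - l) (by linarith : (0:ℝ) ≤ bu - cu)]
      · rintro (⟨-, hcb⟩ | ⟨hcontra, -⟩)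
        · exact ⟨1, by norm_num, by norm_num, by nlinarith, by nlinarith⟩
        · linarith
    · exact absurd hA.symm hauav
    · rcases lt_trichotomy av du with hD | hD | hD
      · have hadu : au < du := lt_trans hA hD
        set lam0 : ℝ := (du - av) / (du - au) with hlam0
        have hpos : (0:ℝ) < du - au := by linarith
        have hl0 : 0 < lam0 := div_pos (by linarith) hpos
        have hl1 : lam0 < 1 := by
          rw [hlam0, div_lt_one hpos]; linarith
        have hrep : av = lam0 * au + (1 - lam0) * du := by
          rw [hlam0]; field_simp; ring
        constructor
        · rintro ⟨l, h0, h1, hle, hg⟩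
          right
          refine ⟨hA, hD, lam0, hl0, hl1, hrep, ?_⟩
          have hll : l ≤ lam0 := by
            rw [hlam0, le_div_iff₀ hpos]; nlinarith
          nlinarith [mul_nonneg (by linarith : (0:ℝ) ≤ lam0 - l)
            (by linarith : (0:ℝ) ≤ bu - cu)]
        · rintro (⟨h, -⟩ | ⟨-, -, lam, hx0, hx1, hxrep, hxg⟩)
          · linarith
          · exact ⟨lam, hx0.le, hx1.le, le_of_eq hxrep, hxg⟩
      · exact absurd hD.symm hduav
      · constructor
        · rintro ⟨l, hl⟩
          exact absurd hl (hnotmem l hD)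
        · rintro (⟨h, -⟩ | ⟨-, h, -⟩) <;> linarith
  · intro hda hmem
    rw [shadow_char] at hmem
    obtain ⟨l, hl⟩ := hmem
    exact hnotmem l hda hl
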